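/- arXiv:1703.01826 — 2 statements merged into one kernel-verified Lean document; each statement's English description precedes it below -/
import Mathlib

section
/- Let d ≥ 3 and q ∈ (0,1]. Let Π be the d×d cyclic permutation matrix (Π_{i+1 mod d, i} = 1 for all i, all other entries 0), and let T(q) := (1−q)·I + q·Π. Then: (i) the complex number λ := 1 − q + q·e^{2πi/d} is an eigenvalue of T(q), and writing λ = r·e^{iφ} with r ≥ 0 and φ ∈ (−π, π], it satisfies r > e^{−|φ|·tan(π/d)}; and consequently (ii) T(q) is not embeddable: there exist no column-stochastic d×d matrix C and α ≥ 0 such that T(q) = exp(α(C − I)). (Probabilistic rigid translations cannot be achieved by Markovian dynamics.) -/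
open Matrix Polynomial

attribute [local instance] Matrix.linftyOpNormedAddCommGroup Matrix.linftyOpNormedRing
  Matrix.linftyOpNormedAlgebra

set_option linter.unusedSectionVars false

section RigidTranslationAux
open Real


lemma fin_succ_iff {d : ℕ} (hd : 2 ≤ d) (i j : Fin d) [NeZero d] :
    ((i:ℕ) = ((j:ℕ)+1) % d) ↔ i = j + 1 := by
  have h1 : ((1 : Fin d) : ℕ) = 1 := by
    rw [Fin.val_one']
    exact Nat.mod_eq_of_lt (by omega)
  rw [Fin.ext_iff, Fin.val_add, h1]

lemma omega_pow_d {d : ℕ} (hd : 0 < d) :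
    Complex.exp (2 * Real.pi * Complex.I / d) ^ d = 1 := by
  rw [← Complex.exp_nat_mul]
  have h : (d:ℂ) * (2 * Real.pi * Complex.I / d) = 2 * Real.pi * Complex.I := by
    have hd0 : (d:ℂ) ≠ 0 := Nat.cast_ne_zero.2 (by omega)
    field_simp
  rw [h, Complex.exp_two_pi_mul_I]

lemma key_vec {d : ℕ} (hd : 3 ≤ d) (i : Fin d) :
    haveI : NeZero d := ⟨by omega⟩
    Complex.exp (2 * Real.pi * Complex.I / d) ^ (d - ((i - 1 : Fin d):ℕ)) =
      Complex.exp (2 * Real.pi * Complex.I / d) * Complex.exp (2 * Real.pi * Complex.I / d) ^ (d - (i:ℕ)) := by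
  haveI : NeZero d := ⟨by omega⟩
  set ω := Complex.exp (2 * Real.pi * Complex.I / d) with hω
  have hωd : ω ^ d = 1 := omega_pow_d (by omega)
  have hj : i = (i - 1) + 1 := (sub_add_cancel i 1).symm
  have hval : (i:ℕ) = (((i-1 : Fin d):ℕ) + 1) % d := (fin_succ_iff (by omega) i (i-1)).2 hj
  set jv := ((i - 1 : Fin d) : ℕ) with hjv
  have hjlt : jv < d := (i - 1).isLt
  rcases Nat.lt_or_ge (jv + 1) d with h | h
  · have hi : (i:ℕ) = jv + 1 := by rw [hval, Nat.mod_eq_of_lt h]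
    have : d - jv = (d - (i:ℕ)) + 1 := by omega
    rw [this, pow_succ, mul_comm]
  · have hjd : jv = d - 1 := by omega
    have hi : (i:ℕ) = 0 := by
      rw [hval]
      have : jv + 1 = d := by omega
      rw [this, Nat.mod_self]
    rw [hjd, hi]
    have : d - (d - 1) = 1 := by omega
    rw [this, Nat.sub_zero, hωd, pow_one, mul_one]


lemma calc_ineq {t x : ℝ} (ht0 : 0 < t) (ht : t < π/2) (hx0 : 0 < x) (hx : x ≤ 2*t) :
    Real.cos (x - t) < Real.exp (x * Real.tan t) * Real.cos t := by
  set g : ℝ → ℝ := fun y => Real.exp (y * Real.tan t) * Real.cos t - Real.cos (y - t) with hg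
  have hcost : 0 < Real.cos t := Real.cos_pos_of_mem_Ioo ⟨by linarith, ht⟩
  have hsint : 0 < Real.sin t := Real.sin_pos_of_pos_of_lt_pi ht0 (by linarith [Real.pi_pos])
  have htant : 0 < Real.tan t := Real.tan_pos_of_pos_of_lt_pi_div_two ht0 ht
  have hderiv : ∀ y, HasDerivAt g
      (Real.sin t * Real.exp (y * Real.tan t) + Real.sin (y - t)) y := by
    intro y
    have h1 : HasDerivAt (fun y : ℝ => y * Real.tan t) (Real.tan t) y := by
      simpa using (hasDerivAt_id y).mul_const (Real.tan t)
    have h2 : HasDerivAt (fun y : ℝ => Real.exp (y * Real.tan t))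
        (Real.exp (y * Real.tan t) * Real.tan t) y := h1.exp
    have h3 : HasDerivAt (fun y : ℝ => Real.exp (y * Real.tan t) * Real.cos t)
        (Real.exp (y * Real.tan t) * Real.tan t * Real.cos t) y := h2.mul_const _
    have h4 : HasDerivAt (fun y : ℝ => Real.cos (y - t)) (-Real.sin (y - t)) y := by
      simpa using ((hasDerivAt_id y).sub_const t).cos
    have := h3.sub h4
    exact this.congr_deriv (by
      rw [Real.tan_eq_sin_div_cos, mul_assoc, div_mul_cancel₀ _ hcost.ne']
      ring)
  have hmono : StrictMonoOn g (Set.Icc 0 (2*t)) := by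
    apply strictMonoOn_of_deriv_pos (convex_Icc _ _)
    · exact (Real.continuous_exp.comp (continuous_id.mul continuous_const)).mul
        continuous_const |>.sub (Real.continuous_cos.comp (continuous_id.sub continuous_const))
        |>.continuousOn
    · intro y hy
      rw [interior_Icc] at hy
      rw [(hderiv y).deriv]
      have hexp : 1 ≤ Real.exp (y * Real.tan t) :=
        Real.one_le_exp (mul_nonneg hy.1.le htant.le)
      have h6 : -Real.sin t < Real.sin (y - t) := by
        rcases le_or_gt t y with h | h
        · have : 0 ≤ Real.sin (y - t) :=
            Real.sin_nonneg_of_nonneg_of_le_pi (by linarith)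
              (by have h2t := hy.2; linarith [Real.pi_pos])
          linarith
        · have hlt : Real.sin (t - y) < Real.sin t :=
            Real.sin_lt_sin_of_lt_of_le_pi_div_two (by linarith) ht.le (by linarith [hy.1])
          have hrw : Real.sin (y - t) = -Real.sin (t - y) := by
            rw [← Real.sin_neg]; ring_nf
          linarith
      nlinarith [mul_le_mul_of_nonneg_left hexp hsint.le]
  have := hmono (Set.left_mem_Icc.2 (by linarith)) ⟨le_of_lt hx0, hx⟩ hx0
  have hg0 : g 0 = 0 := by simp [hg, Real.cos_neg]
  rw [hg0] at this
  have h5 : (0:ℝ) < Real.exp (x * Real.tan t) * Real.cos t - Real.cos (x - t) := this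
  linarith



section aux
variable {d : ℕ} [NeZero d]

lemma pow_entry_nonneg {A : Matrix (Fin d) (Fin d) ℝ} (hA : ∀ i j, 0 ≤ A i j) :
    ∀ (n : ℕ) (i j : Fin d), 0 ≤ (A ^ n) i j := by
  intro n
  induction n with
  | zero => intro i j; simp [Matrix.one_apply]; positivity
  | succ n ih =>
    intro i j
    rw [pow_succ, Matrix.mul_apply]
    exact Finset.sum_nonneg fun k _ => mul_nonneg (ih i k) (hA k j)

noncomputable def entryCLM (i j : Fin d) : Matrix (Fin d) (Fin d) ℝ →L[ℝ] ℝ :=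
  LinearMap.toContinuousLinearMap ((LinearMap.proj j).comp (LinearMap.proj (R := ℝ)
    (φ := fun _ : Fin d => Fin d → ℝ) i))

lemma entryCLM_apply (i j : Fin d) (A : Matrix (Fin d) (Fin d) ℝ) :
    entryCLM i j A = A i j := rfl

lemma exp_entry (A : Matrix (Fin d) (Fin d) ℝ) (i j : Fin d) :
    NormedSpace.exp A i j = ∑' n : ℕ, ((n.factorial : ℝ)⁻¹) * (A ^ n) i j := by
  have hs := NormedSpace.expSeries_summable' (𝕂 := ℝ) A
  have h1 : NormedSpace.exp A i j = entryCLM i j (NormedSpace.exp A) := rfl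
  rw [h1, NormedSpace.exp_eq_tsum ℝ]
  beta_reduce
  rw [ContinuousLinearMap.map_tsum (entryCLM i j) hs]
  rfl

lemma exp_entry_summable (A : Matrix (Fin d) (Fin d) ℝ) (i j : Fin d) :
    Summable (fun n : ℕ => ((n.factorial : ℝ)⁻¹) * (A ^ n) i j) := by
  have hs := NormedSpace.expSeries_summable' (𝕂 := ℝ) A
  have := hs.map (entryCLM i j : Matrix (Fin d) (Fin d) ℝ →L[ℝ] ℝ).toLinearMap.toAddMonoidHom
    (entryCLM i j).continuous
  convert this using 1
  funext n
  rfl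

lemma exp_entry_nonneg {A : Matrix (Fin d) (Fin d) ℝ} (hA : ∀ i j, 0 ≤ A i j) (i j : Fin d) :
    0 ≤ NormedSpace.exp A i j := by
  rw [exp_entry]
  exact tsum_nonneg fun n => mul_nonneg (by positivity) (pow_entry_nonneg hA n i j)

lemma exp_diag_ge_one {A : Matrix (Fin d) (Fin d) ℝ} (hA : ∀ i j, 0 ≤ A i j) (i : Fin d) :
    1 ≤ NormedSpace.exp A i i := by
  rw [exp_entry]
  have h0 : (((0:ℕ).factorial : ℝ)⁻¹) * (A ^ 0) i i = 1 := by simp [Matrix.one_apply]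
  calc (1:ℝ) = (((0:ℕ).factorial : ℝ)⁻¹) * (A ^ 0) i i := h0.symm
    _ ≤ ∑' n : ℕ, ((n.factorial : ℝ)⁻¹) * (A ^ n) i i :=
        Summable.le_tsum (exp_entry_summable A i i) 0
          (fun n _ => mul_nonneg (by positivity) (pow_entry_nonneg hA n i i))

lemma exp_smul_one (c : ℝ) :
    NormedSpace.exp (c • (1 : Matrix (Fin d) (Fin d) ℝ)) = Real.exp c • 1 := by
  have hpi : NormedSpace.exp (fun _ : Fin d => c) = fun _ : Fin d => Real.exp c := by
    funext i
    rw [Pi.coe_exp, Real.exp_eq_exp_ℝ]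
  rw [Matrix.smul_one_eq_diagonal, Matrix.exp_diagonal, hpi, Matrix.smul_one_eq_diagonal]

end aux



lemma part_one
    (d : ℕ) (hd : 3 ≤ d) (q : ℝ)
    (Pc : Matrix (Fin d) (Fin d) ℝ)
    (hPc : ∀ i j : Fin d, Pc i j = if (i : ℕ) = ((j : ℕ) + 1) % d then 1 else 0)
    (T : Matrix (Fin d) (Fin d) ℝ)
    (hT : T = (1 - q) • (1 : Matrix (Fin d) (Fin d) ℝ) + q • Pc)
    (lam : ℂ)
    (hlam : lam = 1 - q + q * Complex.exp (2 * Real.pi * Complex.I / d)) :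
    (T.map Complex.ofReal).charpoly.eval lam = 0 := by
  haveI : NeZero d := ⟨by omega⟩
  set ω := Complex.exp (2 * Real.pi * Complex.I / d) with hω
  set Tc := T.map Complex.ofReal with hTc
  set v : Fin d → ℂ := fun j => ω ^ (d - (j:ℕ)) with hv
  have hω0 : ω ≠ 0 := Complex.exp_ne_zero _
  have hvne : v ≠ 0 := by
    intro h
    have h0 : v 0 = 0 := by rw [h]; rfl
    have : v 0 = 1 := by
      simp only [hv, Fin.val_zero, Nat.sub_zero]
      exact omega_pow_d (by omega)
    rw [h0] at this
    exact one_ne_zero this.symm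
  -- mulVec computation
  have hmv : Tc.mulVec v = lam • v := by
    funext i
    have hsum1 : ∑ j, (1 : Matrix (Fin d) (Fin d) ℂ) i j * v j = v i := by
      simp [Matrix.one_apply, ite_mul]
    have hsum2 : ∑ j : Fin d, (if (i : ℕ) = ((j : ℕ) + 1) % d then (1:ℂ) else 0) * v j
        = v (i - 1) := by
      have : ∀ j : Fin d, (if (i : ℕ) = ((j : ℕ) + 1) % d then (1:ℂ) else 0) * v j
          = if i - 1 = j then v j else 0 := by
        intro j
        have hcond : ((i : ℕ) = ((j : ℕ) + 1) % d) ↔ (i - 1 = j) := by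
          rw [fin_succ_iff (by omega) i j, sub_eq_iff_eq_add]
        by_cases h : i - 1 = j
        · rw [if_pos h, if_pos (hcond.2 h), one_mul]
        · rw [if_neg h, if_neg (fun hc => h (hcond.1 hc)), zero_mul]
      rw [Finset.sum_congr rfl (fun j _ => this j), Finset.sum_ite_eq]
      simp
    have : Tc.mulVec v i = ∑ j, Tc i j * v j := rfl
    rw [this]
    have hTcij : ∀ j, Tc i j = ((1 - q : ℝ):ℂ) * (1 : Matrix (Fin d) (Fin d) ℂ) i j
        + (q:ℂ) * (if (i : ℕ) = ((j : ℕ) + 1) % d then (1:ℂ) else 0) := by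
      intro j
      simp only [hTc, Matrix.map_apply, hT, Matrix.add_apply, Matrix.smul_apply,
        smul_eq_mul, hPc, Matrix.one_apply]
      push_cast
      by_cases h1 : i = j <;> by_cases h2 : (i : ℕ) = ((j : ℕ) + 1) % d <;>
        simp [h1, h2, apply_ite Complex.ofReal]
    calc ∑ j, Tc i j * v j
        = ∑ j, (((1 - q : ℝ):ℂ) * ((1 : Matrix (Fin d) (Fin d) ℂ) i j * v j)
            + (q:ℂ) * ((if (i : ℕ) = ((j : ℕ) + 1) % d then (1:ℂ) else 0) * v j)) := by
          refine Finset.sum_congr rfl fun j _ => ?_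
          rw [hTcij j]; ring
      _ = ((1 - q : ℝ):ℂ) * v i + (q:ℂ) * v (i - 1) := by
          rw [Finset.sum_add_distrib, ← Finset.mul_sum, ← Finset.mul_sum, hsum1, hsum2]
      _ = lam * v i := by
          have hkey : v (i - 1) = ω * v i := key_vec hd i
          rw [hkey, hlam]
          push_cast
          ring
  -- determinant zero
  have hdet : (lam • (1 : Matrix (Fin d) (Fin d) ℂ) - Tc).det = 0 := by
    rw [← Matrix.exists_mulVec_eq_zero_iff]
    refine ⟨v, hvne, ?_⟩
    rw [Matrix.sub_mulVec, Matrix.smul_mulVec, Matrix.one_mulVec, hmv, sub_self]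
  -- charpoly eval
  have : Tc.charpoly.eval lam = (lam • (1 : Matrix (Fin d) (Fin d) ℂ) - Tc).det := by
    rw [Matrix.charpoly]
    rw [show Tc.charmatrix.det.eval lam = (evalRingHom lam) Tc.charmatrix.det from rfl]
    rw [RingHom.map_det]
    congr 1
    ext i j
    by_cases h : i = j
    · subst h
      simp [Matrix.charmatrix_apply_eq, Matrix.one_apply]
    · simp [Matrix.charmatrix_apply_ne _ _ _ h, Matrix.one_apply, h]
  rw [this, hdet]


lemma part_two
    (d : ℕ) (hd : 3 ≤ d) (q : ℝ) (hq : q ∈ Set.Ioc (0 : ℝ) 1)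
    (lam : ℂ)
    (hlam : lam = 1 - q + q * Complex.exp (2 * Real.pi * Complex.I / d)) :
    Real.exp (-|lam.arg| * Real.tan (Real.pi / d)) < ‖lam‖ := by
  obtain ⟨hq0, hq1⟩ := hq
  set t : ℝ := π / d with htdef
  have hd0 : (0:ℝ) < d := by
    have : (3:ℝ) ≤ d := by exact_mod_cast hd
    linarith
  have ht0 : 0 < t := div_pos pi_pos hd0
  have ht2 : t ≤ π / 3 := by
    rw [htdef]
    apply div_le_div_of_nonneg_left pi_pos.le (by norm_num)
    exact_mod_cast hd
  have tpi2 : t < π / 2 := lt_of_le_of_lt ht2 (by linarith [pi_pos])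
  have hθeq : (2 * ↑Real.pi * Complex.I / ↑d) = ((2*t : ℝ) : ℂ) * Complex.I := by
    rw [htdef]
    push_cast
    have : (d:ℂ) ≠ 0 := by exact_mod_cast ne_of_gt hd0
    field_simp
  have hlam' : lam = ((1 - q : ℝ):ℂ) + (q:ℂ) * Complex.exp (((2*t : ℝ):ℂ) * Complex.I) := by
    rw [hlam, hθeq]; push_cast; ring
  have hsin2t : 0 < Real.sin (2*t) :=
    Real.sin_pos_of_pos_of_lt_pi (by linarith) (by linarith)
  have him : lam.im = q * Real.sin (2*t) := by
    have h := Complex.exp_ofReal_mul_I_im (2*t)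
    rw [hlam', Complex.add_im, Complex.ofReal_im, Complex.im_ofReal_mul, h, zero_add]
  have himpos : 0 < lam.im := by rw [him]; positivity
  have hlam0 : lam ≠ 0 := by
    intro h; rw [h] at himpos; simp at himpos
  have hr : 0 < ‖lam‖ := norm_pos_iff.mpr hlam0
  set r : ℝ := ‖lam‖ with hrdef
  set φ : ℝ := lam.arg with hφdef
  have hsinφ : 0 < Real.sin φ := by
    rw [hφdef, Complex.sin_arg]
    positivity
  have hφ0 : 0 < φ := by
    by_contra h
    push_neg at h
    have h1 : -π ≤ φ := le_of_lt (Complex.neg_pi_lt_arg lam)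
    have := Real.sin_nonpos_of_nonpos_of_neg_pi_le h h1
    linarith
  have hφpi : φ ≤ π := Complex.arg_le_pi lam
  have polar : lam = (r:ℂ) * Complex.exp ((φ:ℝ) * Complex.I) :=
    (Complex.norm_mul_exp_arg_mul_I lam).symm
  -- identity A
  have hA : r * Real.cos (φ - t) = Real.cos t := by
    have e1 : lam * Complex.exp (((-t : ℝ) : ℂ) * Complex.I)
        = (r:ℂ) * Complex.exp (((φ - t : ℝ) : ℂ) * Complex.I) := by
      rw [polar, mul_assoc, ← Complex.exp_add]
      congr 2
      push_cast
      ring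
    have e2 : lam * Complex.exp (((-t : ℝ) : ℂ) * Complex.I)
        = ((1 - q : ℝ):ℂ) * Complex.exp (((-t:ℝ):ℂ) * Complex.I)
          + (q:ℂ) * Complex.exp (((t:ℝ):ℂ) * Complex.I) := by
      rw [hlam', add_mul, mul_assoc, ← Complex.exp_add]
      congr 3
      push_cast
      ring
    have hre := congrArg Complex.re (e1.symm.trans e2)
    simp only [Complex.re_ofReal_mul, Complex.exp_ofReal_mul_I_re, Complex.add_re,
      Real.cos_neg] at hre
    linarith
  -- identity B
  have hB : r * Real.sin (φ - 2*t) = (1 - q) * Real.sin (-(2*t)) := by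
    have e1 : lam * Complex.exp (((-(2*t) : ℝ) : ℂ) * Complex.I)
        = (r:ℂ) * Complex.exp (((φ - 2*t : ℝ) : ℂ) * Complex.I) := by
      rw [polar, mul_assoc, ← Complex.exp_add]
      congr 2
      push_cast
      ring
    have e2 : lam * Complex.exp (((-(2*t) : ℝ) : ℂ) * Complex.I)
        = ((1 - q : ℝ):ℂ) * Complex.exp (((-(2*t):ℝ):ℂ) * Complex.I)
          + (q:ℂ) * Complex.exp (((0:ℝ):ℂ) * Complex.I) := by
      rw [hlam', add_mul, mul_assoc, ← Complex.exp_add]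
      congr 3
      push_cast
      ring
    have him2 := congrArg Complex.im (e1.symm.trans e2)
    simp only [Complex.im_ofReal_mul, Complex.exp_ofReal_mul_I_im, Complex.add_im,
      Real.sin_zero, mul_zero, add_zero] at him2
    linarith
  have hφ2t : φ ≤ 2*t := by
    by_contra h
    push_neg at h
    have h1 : 0 < Real.sin (φ - 2*t) :=
      Real.sin_pos_of_pos_of_lt_pi (by linarith) (by linarith)
    have h2 : (1 - q) * Real.sin (-(2*t)) ≤ 0 := by
      rw [Real.sin_neg]
      nlinarith
    nlinarith
  have hcosφt : 0 < Real.cos (φ - t) :=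
    Real.cos_pos_of_mem_Ioo ⟨by linarith, by linarith⟩
  have hmain := calc_ineq ht0 tpi2 hφ0 hφ2t
  have hcost : 0 < Real.cos t := Real.cos_pos_of_mem_Ioo ⟨by linarith, tpi2⟩
  rw [abs_of_pos hφ0]
  have hrw : r = Real.cos t / Real.cos (φ - t) := by
    rw [eq_div_iff (ne_of_gt hcosφt)]
    exact hA
  rw [hrw, lt_div_iff₀ hcosφt]
  calc Real.exp (-φ * Real.tan t) * Real.cos (φ - t)
      < Real.exp (-φ * Real.tan t) * (Real.exp (φ * Real.tan t) * Real.cos t) :=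
        mul_lt_mul_of_pos_left hmain (Real.exp_pos _)
    _ = Real.cos t := by
        rw [← mul_assoc, ← Real.exp_add]
        have : -φ * Real.tan t + φ * Real.tan t = 0 := by ring
        rw [this, Real.exp_zero, one_mul]



lemma part_three
    (d : ℕ) (hd : 3 ≤ d) (q : ℝ) (hq : q ∈ Set.Ioc (0 : ℝ) 1)
    (Pc : Matrix (Fin d) (Fin d) ℝ)
    (hPc : ∀ i j : Fin d, Pc i j = if (i : ℕ) = ((j : ℕ) + 1) % d then 1 else 0)
    (T : Matrix (Fin d) (Fin d) ℝ)
    (hT : T = (1 - q) • (1 : Matrix (Fin d) (Fin d) ℝ) + q • Pc) :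
    ¬∃ (C : Matrix (Fin d) (Fin d) ℝ) (α : ℝ),
      (∀ i j, 0 ≤ C i j) ∧ (∀ j, ∑ i, C i j = 1) ∧ 0 ≤ α ∧
      T = NormedSpace.exp (α • (C - 1)) := by
  obtain ⟨hq0, hq1⟩ := hq
  haveI : NeZero d := ⟨by omega⟩
  rintro ⟨C, α, hC0, _, hα, hTexp⟩
  -- Fin facts
  have h1v : ((1 : Fin d) : ℕ) = 1 := by
    rw [Fin.val_one']; exact Nat.mod_eq_of_lt (by omega)
  have h10 : (1 : Fin d) ≠ 0 := by
    intro h; rw [Fin.ext_iff, h1v] at h; simp at h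
  have h20 : (1 : Fin d) + 1 ≠ 0 := by
    intro h
    rw [Fin.ext_iff, Fin.val_add, h1v] at h
    have : (1 + 1) % d = 2 := Nat.mod_eq_of_lt (by omega)
    rw [this] at h
    simp at h
  have hne1 : ∀ j : Fin d, j + 1 ≠ j := by
    intro j h
    have := add_left_cancel (a := j) (b := (1 : Fin d)) (c := 0) (by rw [add_zero]; exact h)
    exact h10 this
  have hne2 : ∀ j : Fin d, j + 1 + 1 ≠ j := by
    intro j h
    rw [add_assoc] at h
    have := add_left_cancel (a := j) (b := (1 : Fin d) + 1) (c := 0) (by rw [add_zero]; exact h)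
    exact h20 this
  -- entries of T
  have hTij : ∀ i j : Fin d, T i j
      = (1 - q) * (if i = j then 1 else 0) + q * (if i = j + 1 then 1 else 0) := by
    intro i j
    rw [hT]
    simp only [Matrix.add_apply, Matrix.smul_apply, Matrix.one_apply, hPc, smul_eq_mul]
    congr 2
    · exact if_congr (fin_succ_iff (by omega) i j) rfl rfl
  have hTdiag : ∀ j : Fin d, T j j = 1 - q := by
    intro j
    rw [hTij, if_pos rfl, if_neg (Ne.symm (hne1 j))]
    ring
  have hTsub : ∀ j : Fin d, T (j + 1) j = q := by
    intro j
    rw [hTij, if_pos rfl, if_neg (hne1 j)]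
    ring
  have hTzero : ∀ i j : Fin d, i ≠ j → i ≠ j + 1 → T i j = 0 := by
    intro i j h1 h2
    rw [hTij, if_neg h1, if_neg h2]
    ring
  -- the square root matrix
  set β : ℝ := α / 2 with hβ
  set Q : Matrix (Fin d) (Fin d) ℝ := NormedSpace.exp (β • (C - 1)) with hQ
  have hQQ : Q * Q = T := by
    rw [hQ, ← Matrix.exp_add_of_commute _ _ (Commute.refl _), hTexp]
    congr 1
    rw [← add_smul]
    congr 1
    rw [hβ]; ring
  -- nonnegativity of Q
  have hsplit : β • (C - 1) = (-β) • (1 : Matrix (Fin d) (Fin d) ℝ) + β • C := by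
    module
  have hQsplit : Q = Real.exp (-β) • NormedSpace.exp (β • C) := by
    rw [hQ, hsplit, Matrix.exp_add_of_commute _ _ ((Commute.one_left (β • C)).smul_left (-β)),
      exp_smul_one, Matrix.smul_mul, Matrix.one_mul]
  have hβC : ∀ i j, 0 ≤ (β • C) i j := by
    intro i j
    have : (β • C) i j = β * C i j := rfl
    rw [this]
    exact mul_nonneg (by positivity) (hC0 i j)
  have hQnn : ∀ i j, 0 ≤ Q i j := by
    intro i j
    rw [hQsplit]
    have : (Real.exp (-β) • NormedSpace.exp (β • C)) i j
        = Real.exp (-β) * NormedSpace.exp (β • C) i j := rfl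
    rw [this]
    exact mul_nonneg (Real.exp_pos _).le (exp_entry_nonneg hβC i j)
  have hQdiag : ∀ i, 0 < Q i i := by
    intro i
    rw [hQsplit]
    have : (Real.exp (-β) • NormedSpace.exp (β • C)) i i
        = Real.exp (-β) * NormedSpace.exp (β • C) i i := rfl
    rw [this]
    have := exp_diag_ge_one hβC i
    nlinarith [Real.exp_pos (-β)]
  have hTQQ : ∀ i j, T i j = ∑ k, Q i k * Q k j := by
    intro i j
    rw [← hQQ, Matrix.mul_apply]
  -- q < 1
  have h1q : q < 1 := by
    rcases lt_or_eq_of_le hq1 with h | h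
    · exact h
    exfalso
    have hle : Q 0 0 * Q 0 0 ≤ ∑ k, Q 0 k * Q k 0 :=
      Finset.single_le_sum (f := fun k => Q 0 k * Q k 0)
        (fun k _ => mul_nonneg (hQnn 0 k) (hQnn k 0)) (Finset.mem_univ 0)
    rw [← hTQQ 0 0, hTdiag 0, ← h] at hle
    nlinarith [hQdiag 0]
  -- zero pattern of Q
  have hQzero : ∀ i j : Fin d, i ≠ j → i ≠ j + 1 → Q i j = 0 := by
    intro i j h1 h2
    have hle : Q i j * Q j j ≤ ∑ k, Q i k * Q k j :=
      Finset.single_le_sum (f := fun k => Q i k * Q k j)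
        (fun k _ => mul_nonneg (hQnn i k) (hQnn k j)) (Finset.mem_univ j)
    rw [← hTQQ i j, hTzero i j h1 h2] at hle
    have h0 : Q i j * Q j j = 0 :=
      le_antisymm hle (mul_nonneg (hQnn i j) (hQnn j j))
    rcases mul_eq_zero.mp h0 with h | h
    · exact h
    · exact absurd h (ne_of_gt (hQdiag j))
  -- subdiagonal of Q positive
  have hb : ∀ j : Fin d, 0 < Q (j + 1) j := by
    intro j
    rcases lt_or_eq_of_le (hQnn (j + 1) j) with h | h
    · exact h
    exfalso
    have hzero : ∑ k, Q (j + 1) k * Q k j = 0 := by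
      apply Finset.sum_eq_zero
      intro k _
      by_cases hk1 : k = j
      · rw [hk1, ← h, zero_mul]
      by_cases hk2 : k = j + 1
      · rw [hk2, ← h, mul_zero]
      · rw [hQzero k j hk1 hk2, mul_zero]
    rw [← hTQQ (j + 1) j, hTsub j] at hzero
    exact absurd hzero (ne_of_gt hq0)
  -- contradiction
  have hfinal : Q (0 + 1 + 1) (0 + 1) * Q (0 + 1) 0 ≤ ∑ k, Q (0 + 1 + 1) k * Q k 0 :=
    Finset.single_le_sum (f := fun k => Q (0 + 1 + 1) k * Q k 0)
      (fun k _ => mul_nonneg (hQnn _ k) (hQnn k 0)) (Finset.mem_univ (0 + 1))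
  rw [← hTQQ (0 + 1 + 1) 0, hTzero _ 0 (hne2 0) (fun hh => hne1 (0 + 1) hh)] at hfinal
  nlinarith [hb (0 + 1), hb 0]

end RigidTranslationAux

/-- **Probabilistic rigid translations are not embeddable (non-Markovian).** For `d ≥ 3`
and `q ∈ (0,1]`, the stochastic matrix `T(q) = (1−q)I + qΠ` with `Π` the cyclic permutation
has the eigenvalue `λ = 1 − q + q e^{2πi/d}`, whose polar form `λ = r e^{iφ}` violates the
embeddability bound `r ≤ e^{−|φ| tan(π/d)}`; consequently `T(q)` is not of the form
`exp(α(C − I))` with `α ≥ 0` and `C` column-stochastic. -/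
theorem rigid_translation_not_embeddable
    (d : ℕ) (hd : 3 ≤ d) (q : ℝ) (hq : q ∈ Set.Ioc (0 : ℝ) 1)
    (Pc : Matrix (Fin d) (Fin d) ℝ)
    (hPc : ∀ i j : Fin d, Pc i j = if (i : ℕ) = ((j : ℕ) + 1) % d then 1 else 0)
    (T : Matrix (Fin d) (Fin d) ℝ)
    (hT : T = (1 - q) • (1 : Matrix (Fin d) (Fin d) ℝ) + q • Pc)
    (lam : ℂ)
    (hlam : lam = 1 - q + q * Complex.exp (2 * Real.pi * Complex.I / d)) :
    ((T.map Complex.ofReal).charpoly.eval lam = 0) ∧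
    Real.exp (-|lam.arg| * Real.tan (Real.pi / d)) < ‖lam‖ ∧
    ¬∃ (C : Matrix (Fin d) (Fin d) ℝ) (α : ℝ),
      (∀ i j, 0 ≤ C i j) ∧ (∀ j, ∑ i, C i j = 1) ∧ 0 ≤ α ∧
      T = NormedSpace.exp (α • (C - 1)) := by
  exact ⟨part_one d hd q Pc hPc T hT lam hlam,
    part_two d hd q hq lam hlam,
    part_three d hd q hq Pc hPc T hT⟩
end

section
/- Let d ≥ 1, let ω : Fin d → ℝ be injective, fix ν ∈ ℝ with ν ≠ 0, and let M_ν := {(x,y) ∈ Fin d × Fin d : ω_x − ω_y = ν}. Let P be a real d×d matrix with nonnegative entries and each column summing to 1. If complex d×d matrices ρ and σ satisfy |σ_{x'y'}| ≤ Σ_{(x,y) ∈ M_ν} √(P_{x'|x}·P_{y'|y})·|ρ_{xy}| for all (x',y') ∈ M_ν, then Σ_{(x',y') ∈ M_ν} |σ_{x'y'}| ≤ Σ_{(x,y) ∈ M_ν} |ρ_{xy}|; i.e., the total coherence S_ν within any mode is non-increasing under time-translation covariant operations. -/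
open Matrix Finset

/-- **Mode coherence is non-increasing under covariant operations.** For a nonzero mode
`M_ν` and a column-stochastic population transfer matrix `P`, any pair `(ρ, σ)` satisfying
the covariant decoherence bound `|σ_{x'y'}| ≤ Σ_{(x,y)∈M_ν} √(P_{x'|x}P_{y'|y})|ρ_{xy}|`
entrywise on the mode satisfies `Σ_{M_ν}|σ| ≤ Σ_{M_ν}|ρ|`. -/
theorem mode_coherence_nonincreasing
    (d : ℕ) (hd : 1 ≤ d) (ω : Fin d → ℝ) (hω : Function.Injective ω)
    (ν : ℝ) (hν : ν ≠ 0)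
    (Mν : Finset (Fin d × Fin d))
    (hMν : Mν = Finset.univ.filter (fun p : Fin d × Fin d => ω p.1 - ω p.2 = ν))
    (P : Matrix (Fin d) (Fin d) ℝ)
    (hPnn : ∀ x' x, 0 ≤ P x' x)
    (hPcol : ∀ x, ∑ x', P x' x = 1)
    (ρ σ : Matrix (Fin d) (Fin d) ℂ)
    (hbound : ∀ p ∈ Mν, ‖σ p.1 p.2‖ ≤
      ∑ q ∈ Mν, Real.sqrt (P p.1 q.1 * P p.2 q.2) * ‖ρ q.1 q.2‖) :
    ∑ p ∈ Mν, ‖σ p.1 p.2‖ ≤ ∑ p ∈ Mν, ‖ρ p.1 p.2‖ := by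

  -- On the mode, the first (resp. second) coordinate determines the pair.
  have hfst : ∀ p ∈ Mν, ∀ p' ∈ Mν, p.1 = p'.1 → p = p' := by
    intro p hp p' hp' h1
    rw [hMν, Finset.mem_filter] at hp hp'
    have h2 : ω p.2 = ω p'.2 := by
      have := hp.2; have := hp'.2; linarith [hp.2, hp'.2, congrArg ω h1,
        show ω p.1 = ω p'.1 from congrArg ω h1]
    exact Prod.ext h1 (hω h2)
  have hsnd : ∀ p ∈ Mν, ∀ p' ∈ Mν, p.2 = p'.2 → p = p' := by
    intro p hp p' hp' h2
    rw [hMν, Finset.mem_filter] at hp hp'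
    have h1 : ω p.1 = ω p'.1 := by
      have hc : ω p.2 = ω p'.2 := congrArg ω h2
      linarith [hp.2, hp'.2]
    exact Prod.ext (hω h1) h2
  -- sum of a column over first coords of the mode is ≤ 1
  have key1 : ∀ x : Fin d, ∑ p ∈ Mν, P p.1 x ≤ 1 := by
    intro x
    rw [show (∑ p ∈ Mν, P p.1 x) = ∑ x' ∈ Mν.image Prod.fst, P x' x from
      (Finset.sum_image (f := fun x' => P x' x) (fun p hp p' hp' h => hfst p hp p' hp' h)).symm]
    calc ∑ x' ∈ Mν.image Prod.fst, P x' x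
        ≤ ∑ x' : Fin d, P x' x :=
          Finset.sum_le_sum_of_subset_of_nonneg (Finset.subset_univ _)
            (fun i _ _ => hPnn i x)
      _ = 1 := hPcol x
  have key2 : ∀ x : Fin d, ∑ p ∈ Mν, P p.2 x ≤ 1 := by
    intro x
    rw [show (∑ p ∈ Mν, P p.2 x) = ∑ x' ∈ Mν.image Prod.snd, P x' x from
      (Finset.sum_image (f := fun x' => P x' x) (fun p hp p' hp' h => hsnd p hp p' hp' h)).symm]
    calc ∑ x' ∈ Mν.image Prod.snd, P x' x
        ≤ ∑ x' : Fin d, P x' x :=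
          Finset.sum_le_sum_of_subset_of_nonneg (Finset.subset_univ _)
            (fun i _ _ => hPnn i x)
      _ = 1 := hPcol x
  calc ∑ p ∈ Mν, ‖σ p.1 p.2‖
      ≤ ∑ p ∈ Mν, ∑ q ∈ Mν, Real.sqrt (P p.1 q.1 * P p.2 q.2) * ‖ρ q.1 q.2‖ :=
        Finset.sum_le_sum hbound
    _ = ∑ q ∈ Mν, (∑ p ∈ Mν, Real.sqrt (P p.1 q.1 * P p.2 q.2)) * ‖ρ q.1 q.2‖ := by
        rw [Finset.sum_comm]
        exact Finset.sum_congr rfl fun q _ => (Finset.sum_mul ..).symm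
    _ ≤ ∑ q ∈ Mν, 1 * ‖ρ q.1 q.2‖ := by
        refine Finset.sum_le_sum fun q _ => mul_le_mul_of_nonneg_right ?_ (norm_nonneg _)
        calc ∑ p ∈ Mν, Real.sqrt (P p.1 q.1 * P p.2 q.2)
            ≤ ∑ p ∈ Mν, (P p.1 q.1 + P p.2 q.2) / 2 := by
              refine Finset.sum_le_sum fun p _ => ?_
              rw [Real.sqrt_mul (hPnn p.1 q.1)]
              nlinarith [sq_nonneg (Real.sqrt (P p.1 q.1) - Real.sqrt (P p.2 q.2)),
                Real.sq_sqrt (hPnn p.1 q.1), Real.sq_sqrt (hPnn p.2 q.2)]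
          _ = ((∑ p ∈ Mν, P p.1 q.1) + ∑ p ∈ Mν, P p.2 q.2) / 2 := by
              rw [← Finset.sum_add_distrib, ← Finset.sum_div]
          _ ≤ (1 + 1) / 2 := by
              have := key1 q.1; have := key2 q.2; linarith
          _ = 1 := by norm_num
    _ = ∑ p ∈ Mν, ‖ρ p.1 p.2‖ := by simp
end
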